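/- Let G be a graph with terminal set T and let (L,S,R) be a Steiner cut of size at least c+1 that is minimum among Steiner cuts. Then every (A,B)-weak separator of size at most c with A,B ⊆ T must contain A or contain B (i.e., equal A or B restricted to being a weak separator); consequently T is a (T,c)-covering set. -/
import Mathlib


variable {V : Type*} [Fintype V] [DecidableEq V]

/-- A vertex cut `(L,S,R)` of `G`. -/
def IsVertexCut (G : SimpleGraph V) (L S R : Finset V) : Prop :=
  Disjoint L S ∧ Disjoint L R ∧ Disjoint S R ∧ L ∪ S ∪ R = Finset.univ ∧
    L.Nonempty ∧ R.Nonempty ∧ ∀ x ∈ L, ∀ y ∈ R, ¬ G.Adj x y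

/-- A Steiner cut w.r.t. terminal set `T`. -/
def IsSteinerCut (G : SimpleGraph V) (T L S R : Finset V) : Prop :=
  IsVertexCut G L S R ∧ (L ∩ T).Nonempty ∧ (R ∩ T).Nonempty

/-- `S` is an `(A,B)`-weak separator in `G` (it may intersect `A` and `B`). -/
def IsWeakSeparator (G : SimpleGraph V) (A B S : Finset V) : Prop :=
  ∀ a ∈ A, ∀ b ∈ B, ∀ p : G.Walk a b, ∃ v ∈ p.support, v ∈ S

/-- `Z` is a `(T,c)`-covering set: for all `A, B ⊆ T` with `μ(A,B) ≤ c`, `Z` contains some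
minimum `(A,B)`-weak separator. -/
def IsCoveringSet (G : SimpleGraph V) (T Z : Finset V) (c : ℕ) : Prop :=
  ∀ A B : Finset V, A ⊆ T → B ⊆ T →
    (∃ S : Finset V, IsWeakSeparator G A B S ∧ S.card ≤ c) →
    ∃ S : Finset V, IsWeakSeparator G A B S ∧
      (∀ S' : Finset V, IsWeakSeparator G A B S' → S.card ≤ S'.card) ∧ S ⊆ Z

/-- If every Steiner cut of `G` w.r.t. `T` has size at least `c+1`, then every
`(A,B)`-weak separator of size at most `c` with `A, B ⊆ T` contains `A` or contains `B`;
consequently `T` itself is a `(T,c)`-covering set. -/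
theorem bigSteinerCut_terminals_cover (G : SimpleGraph V) (T : Finset V) (c : ℕ)
    (hc : 0 < c)
    (hmin : ∀ L S R : Finset V, IsSteinerCut G T L S R → c + 1 ≤ S.card) :
    (∀ A B : Finset V, A ⊆ T → B ⊆ T →
        ∀ S : Finset V, IsWeakSeparator G A B S → S.card ≤ c → A ⊆ S ∨ B ⊆ S) ∧
      IsCoveringSet G T T c := by
  classical
  have key : ∀ A B : Finset V, A ⊆ T → B ⊆ T →
      ∀ S : Finset V, IsWeakSeparator G A B S → S.card ≤ c → A ⊆ S ∨ B ⊆ S := by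
    intro A B hA hB S hsep hcard
    by_contra h
    push_neg at h
    obtain ⟨⟨a, ha, haS⟩, ⟨b, hb, hbS⟩⟩ :
        (∃ a ∈ A, a ∉ S) ∧ (∃ b ∈ B, b ∉ S) := by
      obtain ⟨h1, h2⟩ := h
      exact ⟨Finset.not_subset.mp h1, Finset.not_subset.mp h2⟩
    -- L = vertices reachable from a avoiding S
    set L : Finset V :=
      Finset.univ.filter (fun v => v ∉ S ∧ ∃ p : G.Walk a v, ∀ x ∈ p.support, x ∉ S) with hL
    set R : Finset V := Finset.univ \ (L ∪ S) with hR
    have haL : a ∈ L := by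
      simp only [hL, Finset.mem_filter, Finset.mem_univ, true_and]
      exact ⟨haS, SimpleGraph.Walk.nil, by simp [haS]⟩
    have hbL : b ∉ L := by
      simp only [hL, Finset.mem_filter, Finset.mem_univ, true_and]
      rintro ⟨-, p, hp⟩
      obtain ⟨v, hv, hvS⟩ := hsep a ha b hb p
      exact hp v hv hvS
    have hbR : b ∈ R := by
      simp only [hR, Finset.mem_sdiff, Finset.mem_union, Finset.mem_univ, true_and]
      tauto
    have hLS : Disjoint L S := by
      rw [Finset.disjoint_left]
      intro v hv hvS
      simp only [hL, Finset.mem_filter] at hv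
      exact hv.2.1 hvS
    have hLR : Disjoint L R := by
      rw [Finset.disjoint_left]
      intro v hv hvR
      simp only [hR, Finset.mem_sdiff, Finset.mem_union] at hvR
      exact hvR.2 (Or.inl hv)
    have hSR : Disjoint S R := by
      rw [Finset.disjoint_left]
      intro v hv hvR
      simp only [hR, Finset.mem_sdiff, Finset.mem_union] at hvR
      exact hvR.2 (Or.inr hv)
    have hunion : L ∪ S ∪ R = Finset.univ := by
      ext v
      simp only [hR, Finset.mem_union, Finset.mem_sdiff, Finset.mem_univ, true_and]
      tauto
    have hadj : ∀ x ∈ L, ∀ y ∈ R, ¬ G.Adj x y := by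
      intro x hx y hy hxy
      simp only [hL, Finset.mem_filter, Finset.mem_univ, true_and] at hx
      obtain ⟨hxS, p, hp⟩ := hx
      have hyS : y ∉ S := by
        simp only [hR, Finset.mem_sdiff, Finset.mem_union] at hy
        tauto
      have hyL : y ∈ L := by
        simp only [hL, Finset.mem_filter, Finset.mem_univ, true_and]
        refine ⟨hyS, p.concat hxy, ?_⟩
        intro z hz
        rw [SimpleGraph.Walk.support_concat] at hz
        simp only [List.concat_eq_append, List.mem_append, List.mem_singleton] at hz
        rcases hz with hz | hz
        · exact hp z hz
        · subst hz; exact hyS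
      simp only [hR, Finset.mem_sdiff, Finset.mem_union] at hy
      exact hy.2 (Or.inl hyL)
    have hcut : IsSteinerCut G T L S R :=
      ⟨⟨hLS, hLR, hSR, hunion, ⟨a, haL⟩, ⟨b, hbR⟩, hadj⟩,
        ⟨a, Finset.mem_inter.mpr ⟨haL, hA ha⟩⟩, ⟨b, Finset.mem_inter.mpr ⟨hbR, hB hb⟩⟩⟩
    have := hmin L S R hcut
    omega
  refine ⟨key, ?_⟩
  intro A B hA hB ⟨S, hsep, hScard⟩
  -- A and B are always weak separators
  have hAsep : IsWeakSeparator G A B A := fun a ha b hb p => ⟨a, p.start_mem_support, ha⟩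
  have hBsep : IsWeakSeparator G A B B := fun a ha b hb p => ⟨b, p.end_mem_support, hb⟩
  have hmincard : min A.card B.card ≤ c := by
    rcases key A B hA hB S hsep hScard with hAS | hBS
    · exact le_trans (min_le_left _ _) (le_trans (Finset.card_le_card hAS) hScard)
    · exact le_trans (min_le_right _ _) (le_trans (Finset.card_le_card hBS) hScard)
  by_cases hAB : A.card ≤ B.card
  · refine ⟨A, hAsep, ?_, hA⟩
    intro S' hS'
    by_contra hlt
    push_neg at hlt
    have hAc : A.card ≤ c := by simpa [min_eq_left hAB] using hmincard
    have hS'c : S'.card ≤ c := by omega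
    rcases key A B hA hB S' hS' hS'c with h1 | h2
    · exact absurd (Finset.card_le_card h1) (by omega)
    · have := Finset.card_le_card h2; omega
  · refine ⟨B, hBsep, ?_, hB⟩
    intro S' hS'
    by_contra hlt
    push_neg at hlt
    have hBc : B.card ≤ c := by
      simpa [min_eq_right (le_of_lt (lt_of_not_ge hAB))] using hmincard
    have hS'c : S'.card ≤ c := by omega
    rcases key A B hA hB S' hS' hS'c with h1 | h2
    · have := Finset.card_le_card h1; omega
    · exact absurd (Finset.card_le_card h2) (by omega)
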